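/- For k ≥ 2 and s ≥ 0, m^s(k,q) < m^{s+1}(k,q): any length-maximal A^sMDS code can be extended by repeating a coordinate on a secant hyperplane to obtain an A^{s+1}MDS code one longer. -/

import Mathlib

open Finset


/-- The number of points (with multiplicity) of the projective system `G`
lying on the hyperplane `ker φ`. -/
noncomputable def hypCount {F : Type*} [Field F] [DecidableEq F] {n k : ℕ}
    (G : Fin n → Fin k → F) (φ : (Fin k → F) →ₗ[F] F) : ℕ :=
  (Finset.univ.filter fun i => φ (G i) = 0).card

/-- `G` is (the projective system of) a non-degenerate linear `[n,k,d]_q` code: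
an `n`-multiset of nonzero points spanning `PG(k-1,q)`, every hyperplane containing
at most `n - d` points, and some hyperplane (a secant) containing exactly `n - d`. -/
def IsCodePS (F : Type*) [Field F] [DecidableEq F] (n k d : ℕ)
    (G : Fin n → Fin k → F) : Prop :=
  0 < d ∧ (∀ i, G i ≠ 0) ∧ Submodule.span F (Set.range G) = ⊤ ∧
  (∀ φ : (Fin k → F) →ₗ[F] F, φ ≠ 0 → hypCount G φ + d ≤ n) ∧
  (∃ φ : (Fin k → F) →ₗ[F] F, φ ≠ 0 ∧ hypCount G φ + d = n)

/-- `mPar F s k` is `m^s(k,q)`: the maximum length of a non-degenerate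
`[n,k,d]_q` code with Singleton defect `s = n - k + 1 - d`. -/
noncomputable def mPar (F : Type*) [Field F] [Fintype F] [DecidableEq F] (s k : ℕ) : ℕ :=
  sSup {n : ℕ | ∃ d : ℕ, ∃ G : Fin n → Fin k → F, IsCodePS F n k d G ∧ d + k + s = n + 1}


noncomputable def dotL {F : Type*} [Field F] {k : ℕ} (a : Fin k → F) : (Fin k → F) →ₗ[F] F :=
  ∑ j, a j • LinearMap.proj j

lemma dotL_apply {F : Type*} [Field F] {k : ℕ} (a x : Fin k → F) :
    dotL a x = ∑ j, a j * x j := by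
  simp [dotL]

lemma dotL_single {F : Type*} [Field F] [DecidableEq F] {k : ℕ} (a : Fin k → F) (m : Fin k) (c : F) :
    dotL a (Pi.single m c) = a m * c := by
  simp [dotL_apply, Pi.single_apply, mul_ite]

lemma dotL_ne_zero {F : Type*} [Field F] [DecidableEq F] {k : ℕ} {a : Fin k → F} (ha : a ≠ 0) :
    (dotL a : (Fin k → F) →ₗ[F] F) ≠ 0 := by
  obtain ⟨m, hm⟩ := Function.ne_iff.mp ha
  intro h
  have := congrArg (fun ψ : (Fin k → F) →ₗ[F] F => ψ (Pi.single m 1)) h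
  simp [dotL_single] at this
  exact hm (by simpa using this)

lemma hypCount_eq {F : Type*} [Field F] [DecidableEq F] {n k : ℕ}
    (G : Fin n → Fin k → F) (φ : (Fin k → F) →ₗ[F] F) :
    hypCount G φ = ∑ i, if φ (G i) = 0 then 1 else 0 := by
  rw [hypCount, Finset.card_filter]

lemma hypCount_snoc {F : Type*} [Field F] [DecidableEq F] {n k : ℕ}
    (G : Fin n → Fin k → F) (v : Fin k → F) (φ : (Fin k → F) →ₗ[F] F) :
    hypCount (Fin.snoc G v) φ = hypCount G φ + if φ v = 0 then 1 else 0 := by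
  rw [hypCount_eq, hypCount_eq, Fin.sum_univ_castSucc]
  simp

/-- length bound -/
lemma code_length_le {F : Type*} [Field F] [Fintype F] [DecidableEq F] {n k d s : ℕ}
    (hk : 2 ≤ k) (G : Fin n → Fin k → F) (h : IsCodePS F n k d G) (hs : d + k + s = n + 1) :
    n ≤ Fintype.card (Fin k → F) * (k + s) := by
  obtain ⟨hd, hnz, -, hH, -⟩ := h
  classical
  set A : Finset (Fin k → F) := univ.filter (· ≠ 0) with hA
  have hsub : (univ : Finset (Fin n)) ⊆ A.biUnion
      (fun a => univ.filter fun i => dotL a (G i) = 0) := by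
    intro i _
    set v := G i with hv
    obtain ⟨j, hj⟩ := Function.ne_iff.mp (hnz i)
    obtain ⟨j', hj'⟩ := Fintype.exists_ne_of_one_lt_card (by simpa using (show 1 < k by omega)) j
    set a : Fin k → F := Pi.single j (v j') - Pi.single j' (v j) with ha2
    have haz : a ≠ 0 := by
      intro h0
      have := congrFun h0 j'
      simp [ha2, Pi.single_apply, hj'] at this
      exact hj (by simpa using this)
    have hav : dotL a v = 0 := by
      simp [dotL_apply, ha2, Pi.single_apply, mul_sub, sub_mul, Finset.sum_sub_distrib,
        ite_mul, mul_ite, Finset.sum_ite_eq', mul_comm]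
    refine Finset.mem_biUnion.mpr ⟨a, ?_, ?_⟩
    · simp [hA, haz]
    · simp [hav]; exact hav
  have hb : ∀ a ∈ A, (univ.filter fun i => dotL a (G i) = 0).card ≤ k + s := by
    intro a haA
    have haz : a ≠ 0 := by simpa [hA] using haA
    have := hH (dotL a) (dotL_ne_zero haz)
    rw [hypCount] at this
    omega
  calc n = (univ : Finset (Fin n)).card := by simp
    _ ≤ (A.biUnion (fun a => univ.filter fun i => dotL a (G i) = 0)).card :=
        Finset.card_le_card hsub
    _ ≤ ∑ a ∈ A, (univ.filter fun i => dotL a (G i) = 0).card := Finset.card_biUnion_le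
    _ ≤ ∑ _a ∈ A, (k + s) := Finset.sum_le_sum hb
    _ = A.card * (k + s) := by simp [Finset.sum_const, Nat.smul_one_eq_cast]
    _ ≤ Fintype.card (Fin k → F) * (k + s) := by
        exact Nat.mul_le_mul_right _ (Finset.card_le_card (Finset.subset_univ _) |>.trans (by simp))

/-- base case: the [k,k,1] code -/
lemma base_code (F : Type*) [Field F] [DecidableEq F] {k : ℕ} (hk : 2 ≤ k) :
    ∃ G : Fin k → Fin k → F, IsCodePS F k k 1 G := by
  classical
  have hk0 : 0 < k := by omega
  set G : Fin k → Fin k → F := fun i => Pi.single i 1 with hG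
  set z : Fin k := ⟨0, hk0⟩ with hz
  refine ⟨G, one_pos, ?_, ?_, ?_, LinearMap.proj z, ?_, ?_⟩
  · intro i h0
    have := congrFun h0 i
    simp [hG] at this
  · have := (Pi.basisFun F (Fin k)).span_eq
    have heq : Set.range G = Set.range (Pi.basisFun F (Fin k)) := by
      have h2 : ⇑(Pi.basisFun F (Fin k)) = G := by
        funext i
        simp [hG, Pi.basisFun_apply]
      rw [h2]
    rw [heq, this]
  · intro φ hφ
    have hex : ∃ i, φ (Pi.single i 1) ≠ 0 := by
      by_contra hcon
      push_neg at hcon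
      exact hφ ((Pi.basisFun F (Fin k)).ext fun i => by
        simpa [Pi.basisFun_apply] using hcon i)
    obtain ⟨i, hi⟩ := hex
    have hsub : (univ.filter fun x => φ (G x) = 0) ⊆ univ.erase i := by
      intro x hx
      rw [Finset.mem_filter] at hx
      refine Finset.mem_erase.mpr ⟨?_, Finset.mem_univ _⟩
      rintro rfl; exact hi hx.2
    have := Finset.card_le_card hsub
    rw [Finset.card_erase_of_mem (Finset.mem_univ _)] at this
    simp only [Finset.card_univ, Fintype.card_fin] at this
    rw [hypCount]
    omega
  · intro h0
    have := congrArg (fun ψ : (Fin k → F) →ₗ[F] F => ψ (Pi.single z 1)) h0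
    simp [hG] at this
  · have hfe : (univ.filter fun i => (LinearMap.proj z : (Fin k → F) →ₗ[F] F) (G i) = 0) = univ.erase z := by
      ext i
      simp only [Finset.mem_filter, Finset.mem_univ, true_and, Finset.mem_erase, and_true]
      rw [hG]
      simp only [LinearMap.proj_apply, Pi.single_apply]
      constructor
      · intro h hiz; rw [hiz] at h; simp at h
      · intro h; rw [if_neg (fun hh => h hh.symm)]
    rw [hypCount, hfe, Finset.card_erase_of_mem (Finset.mem_univ _)]
    simp only [Finset.card_univ, Fintype.card_fin]
    omega

/-- extension -/
lemma extend_code {F : Type*} [Field F] [DecidableEq F] {n k d s : ℕ} (hk : 2 ≤ k)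
    (G : Fin n → Fin k → F) (h : IsCodePS F n k d G) (hs : d + k + s = n + 1) :
    ∃ G' : Fin (n + 1) → Fin k → F, IsCodePS F (n + 1) k d G' := by
  classical
  obtain ⟨hd, hnz, hspan, hH, φ₀, hφ₀, hsec⟩ := h
  have h1 : 0 < hypCount G φ₀ := by omega
  rw [hypCount, Finset.card_pos] at h1
  obtain ⟨i₀, hi₀⟩ := h1
  rw [Finset.mem_filter] at hi₀
  have hi₀ : φ₀ (G i₀) = 0 := hi₀.2
  set G' : Fin (n + 1) → Fin k → F := Fin.snoc G (G i₀) with hG'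
  refine ⟨G', hd, ?_, ?_, ?_, φ₀, hφ₀, ?_⟩
  · intro i
    refine Fin.lastCases ?_ ?_ i
    · simpa [hG'] using hnz i₀
    · intro j; simpa [hG'] using hnz j
  · rw [eq_top_iff, ← hspan]
    refine Submodule.span_le.mpr ?_
    rintro _ ⟨i, rfl⟩
    exact Submodule.subset_span ⟨i.castSucc, by simp [hG']⟩
  · intro ψ hψ
    have := hH ψ hψ
    rw [hG', hypCount_snoc]
    split <;> omega
  · rw [hG', hypCount_snoc, if_pos hi₀]
    omega

/-- For `k ≥ 2` and any `s`, `m^s(k,q) < m^{s+1}(k,q)`. -/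
theorem mPar_lt_succ_defect (F : Type*) [Field F] [Fintype F] [DecidableEq F]
    (s k : ℕ) (hk : 2 ≤ k) :
    mPar F s k < mPar F (s + 1) k := by
  classical
  set S : ℕ → Set ℕ := fun t =>
    {n : ℕ | ∃ d : ℕ, ∃ G : Fin n → Fin k → F, IsCodePS F n k d G ∧ d + k + t = n + 1} with hS
  have hbdd : ∀ t, BddAbove (S t) := by
    intro t
    refine ⟨Fintype.card (Fin k → F) * (k + t), ?_⟩
    rintro n ⟨d, G, hG, hd⟩
    exact code_length_le hk G hG hd
  have hne : ∀ t, (S t).Nonempty := by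
    intro t
    induction t with
    | zero =>
      obtain ⟨G, hG⟩ := base_code F (k := k) hk
      exact ⟨k, 1, G, hG, by omega⟩
    | succ t ih =>
      obtain ⟨n, d, G, hG, hd⟩ := ih
      obtain ⟨G', hG'⟩ := extend_code hk G hG hd
      exact ⟨n + 1, d, G', hG', by omega⟩
  obtain ⟨d, G, hG, hd⟩ := Nat.sSup_mem (hne s) (hbdd s)
  obtain ⟨G', hG'⟩ := extend_code hk G hG hd
  have hmem' : sSup (S s) + 1 ∈ S (s + 1) := ⟨d, G', hG', by omega⟩
  have hle : sSup (S s) + 1 ≤ sSup (S (s + 1)) := le_csSup (hbdd (s + 1)) hmem'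
  have hlt : sSup (S s) < sSup (S (s + 1)) := by omega
  simpa [mPar, hS] using hlt
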